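/- Laplace's principle: Let E : ℝ^d → ℝ be continuous and bounded below, and let μ be a probability measure on ℝ^d with compact support. Then lim_{α → ∞} ( -(1/α) · log ( ∫ exp(-α E(x)) dμ(x) ) ) = inf_{x ∈ supp(μ)} E(x). -/

import Mathlib

open MeasureTheory Filter

/-- The support of a measure: points all of whose neighborhoods have positive mass. -/
def measureSupport {X : Type*} [TopologicalSpace X] [MeasurableSpace X]
    (μ : Measure X) : Set X :=
  {x | ∀ U ∈ nhds x, 0 < μ U}

/-- **Laplace's principle.** For `E : ℝ^d → ℝ` continuous and bounded below
and `μ` a compactly supported probability measure on `ℝ^d`,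
`lim_{α → ∞} -(1/α) log ∫ e^{-α E} dμ = inf_{supp μ} E`. -/
theorem stmt1 {d : ℕ} (E : EuclideanSpace ℝ (Fin d) → ℝ)
    (hE : Continuous E) (hbdd : BddBelow (Set.range E))
    (μ : Measure (EuclideanSpace ℝ (Fin d))) [IsProbabilityMeasure μ]
    (hsupp : IsCompact (measureSupport μ)) (hμsupp : μ (measureSupport μ)ᶜ = 0) :
    Tendsto (fun α : ℝ => -(1 / α) * Real.log (∫ x, Real.exp (-α * E x) ∂μ))
      atTop (nhds (sInf (E '' measureSupport μ))) := by
  set S := measureSupport μ with hSdef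
  have hSne : S.Nonempty := by
    by_contra h
    rw [Set.not_nonempty_iff_eq_empty] at h
    have h1 : μ Set.univ = 0 := by
      rw [← Set.compl_empty, ← h]; exact hμsupp
    simp [measure_univ] at h1
  have hES_ne : (E '' S).Nonempty := hSne.image E
  have hES_bdd : BddBelow (E '' S) := hbdd.mono (Set.image_subset_range _ _)
  set m := sInf (E '' S) with hm
  have haeS : ∀ᵐ x ∂μ, x ∈ S := by
    rw [ae_iff]; exact hμsupp
  obtain ⟨b, hb⟩ := hbdd
  have hbE : ∀ x, b ≤ E x := fun x => hb ⟨x, rfl⟩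
  have hmeas : ∀ α : ℝ, Continuous (fun x => Real.exp (-α * E x)) := by
    intro α
    fun_prop
  have hint : ∀ α : ℝ, 0 ≤ α → Integrable (fun x => Real.exp (-α * E x)) μ := by
    intro α hα
    apply (integrable_const (Real.exp (-α * b))).mono'
      (hmeas α).aestronglyMeasurable
    filter_upwards with x
    rw [Real.norm_eq_abs, Real.abs_exp]
    exact Real.exp_le_exp.2 (by nlinarith [hbE x])
  have hpos : ∀ α : ℝ, 0 ≤ α → 0 < ∫ x, Real.exp (-α * E x) ∂μ := by
    intro α hα
    rw [integral_pos_iff_support_of_nonneg (fun x => (Real.exp_pos _).le) (hint α hα)]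
    have hs : Function.support (fun x => Real.exp (-α * E x)) = Set.univ := by
      ext x; simp [Function.mem_support, (Real.exp_pos (-α * E x)).ne']
    rw [hs]; simp
  -- lower bound
  have hlow : ∀ α : ℝ, 0 < α →
      m ≤ -(1 / α) * Real.log (∫ x, Real.exp (-α * E x) ∂μ) := by
    intro α hα
    have hIle : (∫ x, Real.exp (-α * E x) ∂μ) ≤ Real.exp (-α * m) := by
      calc (∫ x, Real.exp (-α * E x) ∂μ) ≤ ∫ _x, Real.exp (-α * m) ∂μ := by
            apply integral_mono_ae (hint α hα.le) (integrable_const _)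
            filter_upwards [haeS] with x hx
            exact Real.exp_le_exp.2
              (by nlinarith [csInf_le hES_bdd (Set.mem_image_of_mem E hx)])
        _ = Real.exp (-α * m) := by simp
    have hlog : Real.log (∫ x, Real.exp (-α * E x) ∂μ) ≤ -α * m :=
      (Real.log_le_iff_le_exp (hpos α hα.le)).2 hIle
    have h1 : -(1 / α) * Real.log (∫ x, Real.exp (-α * E x) ∂μ)
        = -Real.log (∫ x, Real.exp (-α * E x) ∂μ) / α := by ring
    rw [h1, le_div_iff₀ hα]
    nlinarith
  rw [Metric.tendsto_atTop]
  intro ε hε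
  obtain ⟨y, hyS, hy⟩ := exists_lt_of_csInf_lt hES_ne
    (show m < m + ε / 2 by linarith)
  obtain ⟨x0, hx0S, rfl⟩ := hyS
  set U := E ⁻¹' (Set.Iio (m + ε / 2)) with hU
  have hUopen : IsOpen U := isOpen_Iio.preimage hE
  have hμU : 0 < μ U := hx0S U (hUopen.mem_nhds hy)
  set c := (μ U).toReal with hc
  have hcpos : 0 < c := ENNReal.toReal_pos hμU.ne' (measure_ne_top μ U)
  have hc1 : c ≤ 1 := by
    simpa [hc] using ENNReal.toReal_mono ENNReal.one_ne_top (prob_le_one (μ := μ) (s := U))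
  have hlogc : Real.log c ≤ 0 := Real.log_nonpos hcpos.le hc1
  refine ⟨max 1 (2 * (-Real.log c) / ε + 1), fun α hα => ?_⟩
  have hα1 : (1 : ℝ) ≤ α := le_trans (le_max_left _ _) hα
  have hαpos : 0 < α := lt_of_lt_of_le one_pos hα1
  have hα2 : 2 * (-Real.log c) / ε + 1 ≤ α := le_trans (le_max_right _ _) hα
  -- lower estimate on the integral
  have hIge : c * Real.exp (-α * (m + ε / 2)) ≤ ∫ x, Real.exp (-α * E x) ∂μ := by
    calc c * Real.exp (-α * (m + ε / 2))
        = Real.exp (-α * (m + ε / 2)) * (μ U).toReal := by rw [hc]; ring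
      _ ≤ ∫ x in U, Real.exp (-α * E x) ∂μ := by
          apply setIntegral_ge_of_const_le_real (hUopen.measurableSet) (measure_ne_top μ U)
          · intro x hx
            exact Real.exp_le_exp.2
              (by nlinarith [Set.mem_Iio.1 (Set.mem_preimage.1 hx), hαpos])
          · exact (hint α hαpos.le).integrableOn
      _ ≤ ∫ x, Real.exp (-α * E x) ∂μ := by
          apply setIntegral_le_integral (hint α hαpos.le)
          filter_upwards with x
          exact (Real.exp_pos _).le
  have hlogI : Real.log c + (-α * (m + ε / 2))
      ≤ Real.log (∫ x, Real.exp (-α * E x) ∂μ) := by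
    have h1 : Real.log (c * Real.exp (-α * (m + ε / 2)))
        = Real.log c + (-α * (m + ε / 2)) := by
      rw [Real.log_mul hcpos.ne' (Real.exp_pos _).ne', Real.log_exp]
    rw [← h1]
    exact Real.log_le_log (by positivity) hIge
  set L := Real.log (∫ x, Real.exp (-α * E x) ∂μ) with hL
  have hupper : -(1 / α) * L < m + ε := by
    have h1 : -(1 / α) * L = -L / α := by ring
    rw [h1, div_lt_iff₀ hαpos]
    -- need -L < (m + ε) * α; from hlogI : log c - α(m+ε/2) ≤ L
    -- so -L ≤ α(m+ε/2) - log c, suffices α(m+ε/2) - log c < α(m+ε),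
    -- i.e. -log c < α ε/2; α ≥ 2(-log c)/ε + 1 and ε > 0 give it.
    have h2 : 2 * (-Real.log c) ≤ (α - 1) * ε := by
      have h3 : 2 * (-Real.log c) / ε ≤ α - 1 := by linarith
      have := (div_le_iff₀ hε).1 h3
      linarith
    nlinarith
  have hlower : m ≤ -(1 / α) * L := hlow α hαpos
  rw [Real.dist_eq, abs_lt]
  constructor <;> nlinarith
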